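/- Let (X_n) be a Markov chain with kernel P, stationary distribution π, satisfying the small set condition P(x,·) ≥ β 1(x∈J) ν(·). In the split-chain construction with first regeneration time T, for any nonnegative measurable function g: E_ν[(∑_{i=0}^{T-1} g(X_i))²] = E_ν[T] · ( E_π[g(X_0)²] + 2 ∑_{n=1}^∞ E_π[g(X_0) g(X_n) 1(T > n)] ). -/

import Mathlib

open MeasureTheory ProbabilityTheory ENNReal

noncomputable section

/-- Bernoulli measure on `Bool` with success probability `p`. -/
def bern (p : ℝ≥0∞) : Measure Bool :=
  p • Measure.dirac true + (1 - p) • Measure.dirac false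

variable {𝓧 : Type*} [MeasurableSpace 𝓧]

/-- Probability of ringing the bell (regenerating) from state `x`. -/
def regenProb (β : ℝ≥0∞) (J : Set 𝓧) (x : 𝓧) : ℝ≥0∞ := J.indicator (fun _ => β) x

/-- The normalized residKernel kernel `Q(x,·) = (P(x,·) - β 1_J(x) ν)/(1 - β 1_J(x))`. -/
def residKernel (P : Kernel 𝓧 𝓧) (β : ℝ≥0∞) (J : Set 𝓧) (ν : Measure 𝓧) (x : 𝓧) :
    Measure 𝓧 :=
  (1 - regenProb β J x)⁻¹ • (P x - regenProb β J x • ν)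

/-- One step of the split chain on `𝓧 × Bool`: given `(x, b)`, the next state is drawn
from `ν` if `b = true` (regeneration) and from `Q(x,·)` otherwise; then the new bell
variable is Bernoulli with probability `β 1_J` at the new state. -/
def splitStep (P : Kernel 𝓧 𝓧) (β : ℝ≥0∞) (J : Set 𝓧) (ν : Measure 𝓧)
    (s : 𝓧 × Bool) : Measure (𝓧 × Bool) :=
  (if s.2 then ν else residKernel P β J ν s.1).bind
    (fun y => (Measure.dirac y).prod (bern (regenProb β J y)))

/-- The initial distribution of the split chain when `X₀ ∼ ξ`. -/
def splitInit (β : ℝ≥0∞) (J : Set 𝓧) (ξ : Measure 𝓧) : Measure (𝓧 × Bool) :=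
  ξ.bind (fun x => (Measure.dirac x).prod (bern (regenProb β J x)))

/-- A split chain: a Markov kernel `P` with stationarity data, satisfying the one-step
small set (minorization) condition, together with the trajectory measures of the
associated split chain on `𝓧 × Bool` (Nummelin / Athreya–Ney construction). -/
structure SplitChain (𝓧 : Type*) [MeasurableSpace 𝓧] where
  P : Kernel 𝓧 𝓧
  β : ℝ≥0∞
  J : Set 𝓧
  ν : Measure 𝓧
  K : Kernel (𝓧 × Bool) (𝓧 × Bool)
  traj : Measure (𝓧 × Bool) → Measure (ℕ → 𝓧 × Bool)
  isMarkovP : IsMarkovKernel P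
  probν : IsProbabilityMeasure ν
  measJ : MeasurableSet J
  βpos : 0 < β
  βle : β ≤ 1
  small : ∀ x ∈ J, β • ν ≤ P x
  hK : ∀ s, K s = splitStep P β J ν s
  probTraj : ∀ μ, IsProbabilityMeasure μ → IsProbabilityMeasure (traj μ)
  h0 : ∀ μ, Measure.map (fun ω => ω 0) (traj μ) = μ
  hMarkov : ∀ μ (n : ℕ),
    Measure.map (fun ω => ((fun i : Fin (n + 1) => ω (i : ℕ)), ω (n + 1))) (traj μ)
      = (Measure.map (fun ω => fun i : Fin (n + 1) => ω (i : ℕ)) (traj μ)) ⊗ₘ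
        (K.comap (fun v : Fin (n + 1) → 𝓧 × Bool => v (Fin.last n))
          (measurable_pi_apply _))

namespace SplitChain

variable (sc : SplitChain 𝓧)

/-- The law of the split chain trajectory with initial distribution `X₀ ∼ ξ`. -/
def law (ξ : Measure 𝓧) : Measure (ℕ → 𝓧 × Bool) := sc.traj (splitInit sc.β sc.J ξ)

/-- The `𝓧`-valued coordinate process. -/
def X (n : ℕ) (ω : ℕ → 𝓧 × Bool) : 𝓧 := (ω n).1

/-- The first regeneration time `T := min {n ≥ 1 : Γ_{n-1} = 1}` (with the convention
`sInf ∅ = 0`). -/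
def T (ω : ℕ → 𝓧 × Bool) : ℕ := sInf {n | 1 ≤ n ∧ (ω (n - 1)).2 = true}

/-- The successive regeneration times `T_k`, with `T_0 := 0`. -/
def Tk (sc : SplitChain 𝓧) : ℕ → (ℕ → 𝓧 × Bool) → ℕ
  | 0, _ => 0
  | (k + 1), ω => sInf {n | Tk sc k ω < n ∧ (ω (n - 1)).2 = true}

/-- `R(n) := min {r ≥ 1 : T_r > n}`. -/
def R (n : ℕ) (ω : ℕ → 𝓧 × Bool) : ℕ := sInf {r | 1 ≤ r ∧ n < sc.Tk r ω}

end SplitChain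

end


noncomputable section

open scoped Classical

variable {𝓧 : Type*} [MeasurableSpace 𝓧]

namespace SplitChain

variable (sc : SplitChain 𝓧)

/-! ### Basic lemmas on the splitting step -/

def pr (x : 𝓧) : ℝ≥0∞ := regenProb sc.β sc.J x

def pstep (y : 𝓧) : Measure (𝓧 × Bool) := (Measure.dirac y).prod (bern (sc.pr y))

lemma pr_le_one (x : 𝓧) : sc.pr x ≤ 1 := by
  classical
  simp only [pr, regenProb, Set.indicator_apply]
  split
  · exact sc.βle
  · exact zero_le_one

lemma measurable_pr : Measurable sc.pr := measurable_const.indicator sc.measJ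

instance bern_sfinite (q : ℝ≥0∞) : SFinite (bern q) := by
  unfold bern; infer_instance

lemma bern_apply (q : ℝ≥0∞) (A : Set Bool) :
    bern q A = (if true ∈ A then q else 0) + (if false ∈ A then 1 - q else 0) := by
  have hA : MeasurableSet A := (Set.to_countable A).measurableSet
  simp [bern, Measure.dirac_apply' _ hA, Set.indicator_apply, mul_ite]

lemma lintegral_bern (q : ℝ≥0∞) (h : Bool → ℝ≥0∞) :
    ∫⁻ b, h b ∂(bern q) = q * h true + (1 - q) * h false := by
  simp [bern, lintegral_add_measure, lintegral_smul_measure, lintegral_dirac]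

lemma lintegral_pstep (y : 𝓧) (h : 𝓧 × Bool → ℝ≥0∞) (hh : Measurable h) :
    ∫⁻ s, h s ∂(sc.pstep y) = sc.pr y * h (y, true) + (1 - sc.pr y) * h (y, false) := by
  rw [pstep, Measure.dirac_prod, lintegral_map hh measurable_prodMk_left, lintegral_bern]

lemma pstep_apply (y : 𝓧) (A : Set (𝓧 × Bool)) (hA : MeasurableSet A) :
    sc.pstep y A = (if (y, true) ∈ A then sc.pr y else 0)
      + (if (y, false) ∈ A then 1 - sc.pr y else 0) := by
  rw [pstep, Measure.dirac_prod, Measure.map_apply measurable_prodMk_left hA, bern_apply]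
  rfl

lemma measurable_pstep : Measurable sc.pstep := by
  apply Measure.measurable_of_measurable_coe
  intro A hA
  simp_rw [pstep_apply sc _ A hA]
  refine Measurable.add ?_ ?_
  · exact Measurable.ite (measurable_prodMk_right (y := true) hA) sc.measurable_pr
      measurable_const
  · exact Measurable.ite (measurable_prodMk_right (y := false) hA)
      (measurable_const.sub sc.measurable_pr) measurable_const

lemma pstep_univ (y : 𝓧) : sc.pstep y Set.univ = 1 := by
  rw [pstep_apply sc y _ MeasurableSet.univ]
  simp [add_tsub_cancel_of_le (sc.pr_le_one y)]

lemma splitInit_eq (ξ : Measure 𝓧) : splitInit sc.β sc.J ξ = ξ.bind sc.pstep := rfl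

lemma lintegral_splitInit (ξ : Measure 𝓧) (h : 𝓧 × Bool → ℝ≥0∞) (hh : Measurable h) :
    ∫⁻ s, h s ∂(splitInit sc.β sc.J ξ)
      = ∫⁻ x, (sc.pr x * h (x, true) + (1 - sc.pr x) * h (x, false)) ∂ξ := by
  rw [splitInit_eq, Measure.lintegral_bind sc.measurable_pstep.aemeasurable hh.aemeasurable]
  exact lintegral_congr fun x => sc.lintegral_pstep x h hh

lemma isProb_splitInit (ξ : Measure 𝓧) [IsProbabilityMeasure ξ] :
    IsProbabilityMeasure (splitInit sc.β sc.J ξ) := by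
  constructor
  rw [splitInit_eq, Measure.bind_apply MeasurableSet.univ sc.measurable_pstep.aemeasurable]
  simp [pstep_univ]

/-! ### The dead states -/

def dead : Set (𝓧 × Bool) := {s | sc.pr s.1 = 1 ∧ s.2 = false}

lemma measurableSet_dead : MeasurableSet sc.dead := by
  have h1 : MeasurableSet {s : 𝓧 × Bool | sc.pr s.1 = 1} :=
    (sc.measurable_pr.comp measurable_fst) (measurableSet_singleton 1)
  have h2 : MeasurableSet {s : 𝓧 × Bool | s.2 = false} :=
    measurable_snd (measurableSet_singleton false)
  exact h1.inter h2

lemma pstep_dead (y : 𝓧) : sc.pstep y sc.dead = 0 := by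
  rw [pstep_apply sc y _ sc.measurableSet_dead]
  have h1 : (y, true) ∉ sc.dead := by simp [dead]
  simp only [h1, if_false, if_neg]
  by_cases h : (y, false) ∈ sc.dead
  · have : sc.pr y = 1 := h.1
    simp [h, this]
  · simp [h]

lemma splitInit_dead (ξ : Measure 𝓧) : splitInit sc.β sc.J ξ sc.dead = 0 := by
  rw [splitInit_eq, Measure.bind_apply sc.measurableSet_dead sc.measurable_pstep.aemeasurable]
  simp [pstep_dead]

/-! ### Lemmas about the kernel K -/

lemma K_eq (s : 𝓧 × Bool) :
    sc.K s = (if s.2 then sc.ν else residKernel sc.P sc.β sc.J sc.ν s.1).bind sc.pstep := by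
  rw [sc.hK]; rfl

lemma K_true {s : 𝓧 × Bool} (hs : s.2 = true) : sc.K s = splitInit sc.β sc.J sc.ν := by
  rw [sc.K_eq, hs, if_pos rfl, splitInit_eq]

lemma prob_eq_of_le {α : Type*} [MeasurableSpace α] {μ₁ μ₂ : Measure α}
    [IsProbabilityMeasure μ₁] [IsProbabilityMeasure μ₂] (h : μ₁ ≤ μ₂) : μ₁ = μ₂ := by
  ext A hA
  refine le_antisymm (Measure.le_iff'.1 h A) ?_
  have h1 : μ₁ A + μ₁ Aᶜ = 1 := by rw [measure_add_measure_compl hA, measure_univ]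
  have h2 : μ₂ A + μ₂ Aᶜ = 1 := by rw [measure_add_measure_compl hA, measure_univ]
  have hc : μ₁ Aᶜ ≤ μ₂ Aᶜ := Measure.le_iff'.1 h Aᶜ
  have e1 : μ₁ A = 1 - μ₁ Aᶜ := by
    rw [← h1]; rw [ENNReal.add_sub_cancel_right (measure_ne_top _ _)]
  have e2 : μ₂ A = 1 - μ₂ Aᶜ := by
    rw [← h2]; rw [ENNReal.add_sub_cancel_right (measure_ne_top _ _)]
  rw [e1, e2]
  exact tsub_le_tsub_left hc 1

lemma pr_eq_one {x : 𝓧} (h : sc.pr x = 1) : x ∈ sc.J ∧ sc.β = 1 := by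
  classical
  by_cases hx : x ∈ sc.J
  · refine ⟨hx, ?_⟩
    simpa [pr, regenProb, Set.indicator_of_mem hx] using h
  · exfalso
    simp [pr, regenProb, Set.indicator_of_notMem hx] at h

lemma pr_smul_le (x : 𝓧) : sc.pr x • sc.ν ≤ sc.P x := by
  by_cases hx : x ∈ sc.J
  · simpa [pr, regenProb, Set.indicator_of_mem hx] using sc.small x hx
  · simp only [pr, regenProb, Set.indicator_of_notMem hx, zero_smul]
    exact Measure.zero_le _

lemma P_eq_nu_of_pr_eq_one {x : 𝓧} (h : sc.pr x = 1) : sc.P x = sc.ν := by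
  haveI := sc.isMarkovP
  haveI := sc.probν
  have hle : sc.ν ≤ sc.P x := by simpa [h] using sc.pr_smul_le x
  exact (prob_eq_of_le hle).symm

lemma resid_eq (x : 𝓧) :
    residKernel sc.P sc.β sc.J sc.ν x = (1 - sc.pr x)⁻¹ • (sc.P x - sc.pr x • sc.ν) := rfl

lemma smul_resid (x : 𝓧) :
    (1 - sc.pr x) • residKernel sc.P sc.β sc.J sc.ν x = sc.P x - sc.pr x • sc.ν := by
  by_cases h : sc.pr x = 1
  · have hP := sc.P_eq_nu_of_pr_eq_one h
    rw [h, tsub_self, zero_smul]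
    rw [hP, one_smul, Measure.sub_eq_zero_of_le le_rfl]
  · have h1 : 1 - sc.pr x ≠ 0 := by
      intro h0
      exact h (le_antisymm (sc.pr_le_one x) (tsub_eq_zero_iff_le.1 h0))
    have h2 : 1 - sc.pr x ≠ ∞ := (tsub_le_self.trans_lt one_lt_top).ne
    rw [sc.resid_eq, smul_smul, ENNReal.mul_inv_cancel h1 h2, one_smul]

lemma haveFin (x : 𝓧) : IsFiniteMeasure (sc.pr x • sc.ν) := by
  haveI := sc.probν
  constructor
  rw [Measure.smul_apply, smul_eq_mul, measure_univ, mul_one]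
  exact (sc.pr_le_one x).trans_lt one_lt_top

lemma sub_mass (x : 𝓧) : (sc.P x - sc.pr x • sc.ν) Set.univ = 1 - sc.pr x := by
  haveI := sc.isMarkovP
  haveI := sc.probν
  haveI := sc.haveFin x
  rw [Measure.sub_apply MeasurableSet.univ (sc.pr_smul_le x)]
  simp [measure_univ, Measure.smul_apply, smul_eq_mul]

lemma K_univ {s : 𝓧 × Bool} (hs : s ∉ sc.dead) : sc.K s Set.univ = 1 := by
  haveI := sc.probν
  rw [sc.K_eq, Measure.bind_apply MeasurableSet.univ sc.measurable_pstep.aemeasurable]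
  simp only [pstep_univ, lintegral_one]
  rcases Bool.eq_false_or_eq_true s.2 with hb | hb
  · rw [hb, if_pos rfl, measure_univ]
  · have hpr : sc.pr s.1 ≠ 1 := fun h => hs ⟨h, hb⟩
    have h1 : 1 - sc.pr s.1 ≠ 0 := by
      intro h0
      exact hpr (le_antisymm (sc.pr_le_one s.1) (tsub_eq_zero_iff_le.1 h0))
    have h2 : 1 - sc.pr s.1 ≠ ∞ := (tsub_le_self.trans_lt one_lt_top).ne
    rw [hb, if_neg (by simp), sc.resid_eq]
    show (1 - sc.pr s.1)⁻¹ * (sc.P s.1 - sc.pr s.1 • sc.ν) Set.univ = 1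
    rw [sc.sub_mass s.1, ENNReal.inv_mul_cancel h1 h2]

lemma K_univ_le (s : 𝓧 × Bool) : sc.K s Set.univ ≤ 1 := by
  by_cases hs : s ∈ sc.dead
  · rw [sc.K_eq, Measure.bind_apply MeasurableSet.univ sc.measurable_pstep.aemeasurable]
    have hzero : residKernel sc.P sc.β sc.J sc.ν s.1 = 0 := by
      have hP := sc.P_eq_nu_of_pr_eq_one hs.1
      rw [sc.resid_eq]
      have h0 : sc.P s.1 - sc.pr s.1 • sc.ν = 0 := by
        rw [hs.1, one_smul, hP, Measure.sub_eq_zero_of_le le_rfl]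
      rw [h0, smul_zero]
    rw [hs.2, if_neg (by simp), hzero]
    simp
  · exact le_of_eq (sc.K_univ hs)

lemma isFiniteKernel_K : IsFiniteKernel sc.K := ⟨⟨1, one_lt_top, sc.K_univ_le⟩⟩

lemma K_dead (s : 𝓧 × Bool) : sc.K s sc.dead = 0 := by
  rw [sc.K_eq, Measure.bind_apply sc.measurableSet_dead sc.measurable_pstep.aemeasurable]
  simp [pstep_dead]

lemma isProb_bind_K {μ : Measure (𝓧 × Bool)} (hp : IsProbabilityMeasure μ)
    (hd : μ sc.dead = 0) : IsProbabilityMeasure (μ.bind sc.K) := by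
  constructor
  rw [Measure.bind_apply MeasurableSet.univ sc.K.measurable.aemeasurable]
  have hae : ∀ᵐ s ∂μ, s ∉ sc.dead := by
    rw [ae_iff]
    simpa using hd
  calc ∫⁻ s, sc.K s Set.univ ∂μ = ∫⁻ _, 1 ∂μ := by
        refine lintegral_congr_ae ?_
        filter_upwards [hae] with s hs
        exact sc.K_univ hs
    _ = 1 := by simp

lemma bind_K_dead (μ : Measure (𝓧 × Bool)) : (μ.bind sc.K) sc.dead = 0 := by
  rw [Measure.bind_apply sc.measurableSet_dead sc.K.measurable.aemeasurable]
  simp [K_dead]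

/-! ### Finitely-determined functions on path space -/

def Det (n : ℕ) (f : (ℕ → 𝓧 × Bool) → ℝ≥0∞) : Prop :=
  ∀ ω ω', (∀ i, i ≤ n → ω i = ω' i) → f ω = f ω'

lemma Det.mono {m n : ℕ} {f : (ℕ → 𝓧 × Bool) → ℝ≥0∞} (h : m ≤ n) (hf : Det m f) :
    Det n f := fun ω ω' ha => hf ω ω' fun i hi => ha i (hi.trans h)

def ext (n : ℕ) (ω : ℕ → 𝓧 × Bool) (s : 𝓧 × Bool) : ℕ → 𝓧 × Bool :=
  fun i => if i ≤ n then ω i else s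

def shf (j : ℕ) (ω : ℕ → 𝓧 × Bool) : ℕ → 𝓧 × Bool := fun i => ω (i + j)

lemma shf_shf (a b : ℕ) (ω : ℕ → 𝓧 × Bool) : shf a (shf b ω) = shf (a + b) ω :=
  funext fun i => by simp [shf, Nat.add_assoc]

lemma measurable_shf (j : ℕ) : Measurable (shf (𝓧 := 𝓧) j) :=
  measurable_pi_lambda _ fun _ => measurable_pi_apply _

lemma Det.shf {n : ℕ} {f : (ℕ → 𝓧 × Bool) → ℝ≥0∞} (hf : Det n f) (j : ℕ) :
    Det (n + j) (fun ω => f (shf j ω)) := fun ω ω' ha =>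
  hf _ _ fun i hi => ha (i + j) (by omega)

lemma Det.mul {n : ℕ} {f g : (ℕ → 𝓧 × Bool) → ℝ≥0∞} (hf : Det n f) (hg : Det n g) :
    Det n (fun ω => f ω * g ω) := fun ω ω' ha => by
  show f ω * g ω = f ω' * g ω'
  rw [hf ω ω' ha, hg ω ω' ha]

/-! ### The key one-step Markov property lemma -/

lemma key (μ : Measure (𝓧 × Bool)) (hμ : IsProbabilityMeasure μ) (n : ℕ)
    (f : (ℕ → 𝓧 × Bool) → ℝ≥0∞) (hf : Measurable f) (hdet : Det (n + 1) f) :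
    ∫⁻ ω, f ω ∂(sc.traj μ) = ∫⁻ ω, ∫⁻ s, f (ext n ω s) ∂(sc.K (ω n)) ∂(sc.traj μ) := by
  haveI := sc.probTraj μ hμ
  haveI := sc.isFiniteKernel_K
  have hpre_m : Measurable (fun ω : ℕ → 𝓧 × Bool => fun i : Fin (n+1) => ω (i : ℕ)) :=
    measurable_pi_lambda _ fun _ => measurable_pi_apply _
  set κ : Kernel (Fin (n+1) → 𝓧 × Bool) (𝓧 × Bool) :=
    sc.K.comap (fun v : Fin (n + 1) → 𝓧 × Bool => v (Fin.last n)) (measurable_pi_apply _)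
    with hκ
  set fb : ((Fin (n+1) → 𝓧 × Bool) × (𝓧 × Bool)) → ℝ≥0∞ :=
    fun q => f (fun i => if h : i ≤ n then q.1 ⟨i, Nat.lt_succ_of_le h⟩ else q.2) with hfbdef
  have hfb_m : Measurable fb := by
    apply hf.comp
    apply measurable_pi_lambda
    intro i
    by_cases h : i ≤ n
    · simp only [dif_pos h]; exact (measurable_pi_apply _).comp measurable_fst
    · simp only [dif_neg h]; exact measurable_snd
  have hext : ∀ (ω : ℕ → 𝓧 × Bool) (s), fb (fun i : Fin (n+1) => ω (i : ℕ), s) = f (ext n ω s) := by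
    intro ω s
    simp only [hfbdef]
    apply congrArg
    funext i
    by_cases h : i ≤ n <;> simp [ext, h]
  have h1 : ∫⁻ ω, f ω ∂(sc.traj μ)
      = ∫⁻ ω, fb (fun i : Fin (n+1) => ω (i : ℕ), ω (n+1)) ∂(sc.traj μ) := by
    refine lintegral_congr fun ω => ?_
    rw [hext]
    refine hdet ω (ext n ω (ω (n+1))) fun i hi => ?_
    simp only [ext]
    split
    · rfl
    · next h => rw [show i = n + 1 by omega]
  have hinner_m : Measurable fun v : Fin (n+1) → 𝓧 × Bool => ∫⁻ s, fb (v, s) ∂(κ v) :=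
    Measurable.lintegral_kernel_prod_right (κ := κ) hfb_m
  rw [h1,
    (lintegral_map hfb_m (hpre_m.prodMk (measurable_pi_apply (n+1)))).symm.trans rfl]
  rw [show (fun ω : ℕ → 𝓧 × Bool => ((fun i : Fin (n+1) => ω (i : ℕ)), ω (n+1)))
      = (fun ω => ((fun i : Fin (n + 1) => ω (i : ℕ)), ω (n + 1))) from rfl]
  rw [sc.hMarkov μ n]
  haveI : IsProbabilityMeasure
      (Measure.map (fun ω : ℕ → 𝓧 × Bool => fun i : Fin (n+1) => ω (i : ℕ)) (sc.traj μ)) :=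
    Measure.isProbabilityMeasure_map hpre_m.aemeasurable
  rw [Measure.lintegral_compProd hfb_m]
  rw [lintegral_map hinner_m hpre_m]
  refine lintegral_congr fun ω => ?_
  have hbase : κ (fun i : Fin (n+1) => ω (i : ℕ)) = sc.K (ω n) := by
    rw [hκ, Kernel.comap_apply]
    norm_num
  rw [hbase]
  exact lintegral_congr fun s => hext ω s

lemma key0 (μ : Measure (𝓧 × Bool)) (f : (ℕ → 𝓧 × Bool) → ℝ≥0∞) (hf : Measurable f)
    (hdet : Det 0 f) :
    ∫⁻ ω, f ω ∂(sc.traj μ) = ∫⁻ s, f (fun _ => s) ∂μ := by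
  have hc : Measurable (fun s : 𝓧 × Bool => f (fun _ => s)) :=
    hf.comp (measurable_pi_lambda _ fun _ => measurable_id)
  calc ∫⁻ ω, f ω ∂(sc.traj μ) = ∫⁻ ω, f (fun _ => ω 0) ∂(sc.traj μ) :=
        lintegral_congr fun ω => hdet ω _ (fun i hi => by rw [Nat.le_zero.1 hi])
    _ = ∫⁻ s, f (fun _ => s) ∂(Measure.map (fun ω => ω 0) (sc.traj μ)) :=
        (lintegral_map hc (measurable_pi_apply 0)).symm
    _ = _ := by rw [sc.h0]

/-! ### Invariance of the split stationary measure -/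

lemma measurable_pstep_lintegral (h : 𝓧 × Bool → ℝ≥0∞) (hh : Measurable h) :
    Measurable (fun y => ∫⁻ t, h t ∂(sc.pstep y)) := by
  simp_rw [sc.lintegral_pstep _ h hh]
  exact (sc.measurable_pr.mul (hh.comp measurable_prodMk_right)).add
    ((measurable_const.sub sc.measurable_pr).mul (hh.comp measurable_prodMk_right))

lemma measurable_K_lintegral (h : 𝓧 × Bool → ℝ≥0∞) (hh : Measurable h) :
    Measurable (fun s => ∫⁻ t, h t ∂(sc.K s)) := by
  haveI := sc.isFiniteKernel_K
  exact Measurable.lintegral_kernel_prod_right (κ := sc.K) (hh.comp measurable_snd)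

lemma lintegral_K_false (x : 𝓧) (h : 𝓧 × Bool → ℝ≥0∞) (hh : Measurable h) :
    (1 - sc.pr x) * ∫⁻ t, h t ∂(sc.K (x, false))
      = ∫⁻ y, (∫⁻ t, h t ∂(sc.pstep y)) ∂(sc.P x - sc.pr x • sc.ν) := by
  rw [sc.K_eq]
  rw [show ((x, false) : 𝓧 × Bool).2 = false from rfl, if_neg (by simp)]
  rw [Measure.lintegral_bind sc.measurable_pstep.aemeasurable hh.aemeasurable]
  rw [← smul_eq_mul, ← lintegral_smul_measure, sc.smul_resid x]

lemma lintegral_bindK_splitInit (π : Measure 𝓧) (hinv : π.bind (fun x => sc.P x) = π)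
    (h : 𝓧 × Bool → ℝ≥0∞) (hh : Measurable h) :
    ∫⁻ t, h t ∂((splitInit sc.β sc.J π).bind sc.K) = ∫⁻ t, h t ∂(splitInit sc.β sc.J π) := by
  have hK : Measurable fun s => ∫⁻ t, h t ∂(sc.K s) := sc.measurable_K_lintegral h hh
  have hstep := sc.measurable_pstep_lintegral h hh
  rw [Measure.lintegral_bind sc.K.measurable.aemeasurable hh.aemeasurable, sc.lintegral_splitInit _ _ hK]
  have hterm : ∀ x, sc.pr x * (∫⁻ t, h t ∂(sc.K (x, true)))
      + (1 - sc.pr x) * ∫⁻ t, h t ∂(sc.K (x, false))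
      = ∫⁻ y, (∫⁻ t, h t ∂(sc.pstep y)) ∂(sc.P x) := by
    intro x
    haveI := sc.haveFin x
    rw [sc.K_true (s := (x, true)) rfl, splitInit_eq,
      Measure.lintegral_bind sc.measurable_pstep.aemeasurable hh.aemeasurable, sc.lintegral_K_false x h hh,
      ← smul_eq_mul, ← lintegral_smul_measure, ← lintegral_add_measure]
    congr 1
    rw [add_comm]
    exact Measure.sub_add_cancel_of_le (sc.pr_smul_le x)
  rw [lintegral_congr hterm, ← Measure.lintegral_bind sc.P.measurable.aemeasurable hstep.aemeasurable, hinv,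
    splitInit_eq, Measure.lintegral_bind sc.measurable_pstep.aemeasurable hh.aemeasurable]

lemma invariantK (π : Measure 𝓧) (hinv : π.bind (fun x => sc.P x) = π) :
    (splitInit sc.β sc.J π).bind sc.K = splitInit sc.β sc.J π := by
  ext A hA
  have := sc.lintegral_bindK_splitInit π hinv (A.indicator 1) (measurable_one.indicator hA)
  simpa [lintegral_indicator_one hA] using this

/-! ### helper measurability/determinacy lemmas for the key integrand -/

lemma measurable_extMap (n : ℕ) :
    Measurable (fun q : (ℕ → 𝓧 × Bool) × (𝓧 × Bool) => ext n q.1 q.2) := by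
  apply measurable_pi_lambda
  intro i
  by_cases h : i ≤ n
  · simp only [ext, if_pos h]; exact (measurable_pi_apply i).comp measurable_fst
  · simp only [ext, if_neg h]; exact measurable_snd

lemma measurable_ext_right (n : ℕ) (ω' : ℕ → 𝓧 × Bool) :
    Measurable (fun s => ext n ω' s) :=
  (measurable_extMap n).comp (measurable_const.prodMk measurable_id)

lemma measurable_keyInt (n : ℕ) (f : (ℕ → 𝓧 × Bool) → ℝ≥0∞) (hf : Measurable f) :
    Measurable (fun ω' : ℕ → 𝓧 × Bool => ∫⁻ s, f (ext n ω' s) ∂(sc.K (ω' n))) := by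
  haveI := sc.isFiniteKernel_K
  have : (fun ω' : ℕ → 𝓧 × Bool => ∫⁻ s, f (ext n ω' s) ∂(sc.K (ω' n)))
      = fun ω' => ∫⁻ s, f (ext n ω' s)
        ∂((sc.K.comap (fun ω'' : ℕ → 𝓧 × Bool => ω'' n) (measurable_pi_apply n)) ω') := by
    funext ω'; rw [Kernel.comap_apply]
  rw [this]
  exact Measurable.lintegral_kernel_prod_right (hf.comp (measurable_extMap n))

lemma det_keyInt (n : ℕ) (f : (ℕ → 𝓧 × Bool) → ℝ≥0∞) :
    Det n (fun ω' => ∫⁻ s, f (ext n ω' s) ∂(sc.K (ω' n))) := by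
  intro ω ω' ha
  have h1 : ω n = ω' n := ha n le_rfl
  have h2 : ∀ s, ext n ω s = ext n ω' s := fun s => funext fun i => by
    simp only [ext]; split
    · exact ha i ‹_›
    · rfl
  show (∫⁻ s, f (ext n ω s) ∂(sc.K (ω n))) = ∫⁻ s, f (ext n ω' s) ∂(sc.K (ω' n))
  rw [h1]
  exact lintegral_congr fun s => by rw [h2 s]

/-! ### Shift and bind -/

lemma shift_bind (μ : Measure (𝓧 × Bool)) (hp : IsProbabilityMeasure μ) (hd : μ sc.dead = 0) :
    ∀ (n : ℕ) (f : (ℕ → 𝓧 × Bool) → ℝ≥0∞), Measurable f → Det n f →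
      ∫⁻ ω, f (shf 1 ω) ∂(sc.traj μ) = ∫⁻ ω, f ω ∂(sc.traj (μ.bind sc.K)) := by
  intro n
  induction n with
  | zero =>
    intro f hf hdet
    have hc : Measurable (fun s : 𝓧 × Bool => f (fun _ => s)) :=
      hf.comp (measurable_pi_lambda _ fun _ => measurable_id)
    have hdet1 : Det 1 (fun ω => f (shf 1 ω)) := Det.mono (by omega) (hdet.shf 1)
    rw [sc.key μ hp 0 (fun ω => f (shf 1 ω)) (hf.comp (measurable_shf 1)) hdet1]
    have h1 : ∀ (ω : ℕ → 𝓧 × Bool) (s), f (shf 1 (ext 0 ω s)) = f (fun _ => s) :=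
      fun ω s => hdet _ _ fun i hi => by
        rw [Nat.le_zero.1 hi]; simp [shf, ext]
    calc ∫⁻ ω, ∫⁻ s, f (shf 1 (ext 0 ω s)) ∂(sc.K (ω 0)) ∂(sc.traj μ)
        = ∫⁻ ω, (fun ω' : ℕ → 𝓧 × Bool => ∫⁻ s, f (fun _ => s) ∂(sc.K (ω' 0))) ω
            ∂(sc.traj μ) :=
          lintegral_congr fun ω => lintegral_congr fun s => h1 ω s
      _ = ∫⁻ t, ∫⁻ s, f (fun _ => s) ∂(sc.K ((fun _ : ℕ => t) 0)) ∂μ := by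
          refine sc.key0 μ _ ((sc.measurable_K_lintegral _ hc).comp (measurable_pi_apply 0)) ?_
          intro ω ω' ha
          show (∫⁻ s, f (fun _ => s) ∂(sc.K (ω 0))) = ∫⁻ s, f (fun _ => s) ∂(sc.K (ω' 0))
          rw [ha 0 le_rfl]
      _ = ∫⁻ s, f (fun _ => s) ∂(μ.bind sc.K) :=
          (Measure.lintegral_bind sc.K.measurable.aemeasurable hc.aemeasurable).symm
      _ = ∫⁻ ω, f ω ∂(sc.traj (μ.bind sc.K)) :=
          (sc.key0 (μ.bind sc.K) f hf hdet).symm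
  | succ n ih =>
    intro f hf hdet
    have hprob : IsProbabilityMeasure (μ.bind sc.K) := sc.isProb_bind_K hp hd
    have hdet2 : Det (n + 2) (fun ω => f (shf 1 ω)) := Det.mono (by omega) (hdet.shf 1)
    set H : (ℕ → 𝓧 × Bool) → ℝ≥0∞ := fun ω' => ∫⁻ s, f (ext n ω' s) ∂(sc.K (ω' n)) with hH
    have hH_m : Measurable H := sc.measurable_keyInt n f hf
    have hH_det : Det n H := sc.det_keyInt n f
    rw [sc.key μ hp (n + 1) (fun ω => f (shf 1 ω)) (hf.comp (measurable_shf 1)) hdet2]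
    have hpt : ∀ (ω : ℕ → 𝓧 × Bool) s, f (shf 1 (ext (n + 1) ω s)) = f (ext n (shf 1 ω) s) := by
      intro ω s; apply congrArg; funext i
      simp only [shf, ext]
      by_cases h : i ≤ n
      · rw [if_pos (by omega), if_pos h]
      · rw [if_neg (by omega), if_neg h]
    calc ∫⁻ ω, ∫⁻ s, f (shf 1 (ext (n + 1) ω s)) ∂(sc.K (ω (n + 1))) ∂(sc.traj μ)
        = ∫⁻ ω, H (shf 1 ω) ∂(sc.traj μ) :=
          lintegral_congr fun ω => lintegral_congr fun s => hpt ω s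
      _ = ∫⁻ ω, H ω ∂(sc.traj (μ.bind sc.K)) := ih H hH_m hH_det
      _ = ∫⁻ ω, f ω ∂(sc.traj (μ.bind sc.K)) :=
          (sc.key (μ.bind sc.K) hprob n f hf hdet).symm

/-! ### Stationarity of the split stationary law under shifts -/

lemma shift_inv (π : Measure 𝓧) [IsProbabilityMeasure π]
    (hinv : π.bind (fun x => sc.P x) = π)
    (n : ℕ) (f : (ℕ → 𝓧 × Bool) → ℝ≥0∞) (hf : Measurable f) (hdet : Det n f) (j : ℕ) :
    ∫⁻ ω, f (shf j ω) ∂(sc.traj (splitInit sc.β sc.J π))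
      = ∫⁻ ω, f ω ∂(sc.traj (splitInit sc.β sc.J π)) := by
  induction j with
  | zero => exact lintegral_congr fun ω => rfl
  | succ j ih =>
    haveI := sc.isProb_splitInit π
    calc ∫⁻ ω, f (shf (j + 1) ω) ∂(sc.traj (splitInit sc.β sc.J π))
        = ∫⁻ ω, (fun ω' => f (shf j ω')) (shf 1 ω) ∂(sc.traj (splitInit sc.β sc.J π)) :=
          lintegral_congr fun ω => by
            show f (shf (j + 1) ω) = f (shf j (shf 1 ω))
            rw [shf_shf]
      _ = ∫⁻ ω, f (shf j ω) ∂(sc.traj ((splitInit sc.β sc.J π).bind sc.K)) :=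
          sc.shift_bind _ inferInstance (sc.splitInit_dead π) (n + j) _
            (hf.comp (measurable_shf j)) (hdet.shf j)
      _ = ∫⁻ ω, f (shf j ω) ∂(sc.traj (splitInit sc.β sc.J π)) := by
          rw [sc.invariantK π hinv]
      _ = _ := ih

/-! ### Independence of past and future at a regeneration -/

lemma regen_indep (μ : Measure (𝓧 × Bool)) (hμ : IsProbabilityMeasure μ) :
    ∀ (m : ℕ) (f : (ℕ → 𝓧 × Bool) → ℝ≥0∞), Measurable f → Det m f →
      ∀ (k : ℕ) (G : (ℕ → 𝓧 × Bool) → ℝ≥0∞), Measurable G → Det k G →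
      (∀ ω, (ω k).2 = false → G ω = 0) →
    ∫⁻ ω, G ω * f (shf (k + 1) ω) ∂(sc.traj μ)
      = (∫⁻ ω, G ω ∂(sc.traj μ))
        * ∫⁻ ω, f ω ∂(sc.traj (splitInit sc.β sc.J sc.ν)) := by
  intro m
  induction m with
  | zero =>
    intro f hf hdf k G hG hdG hsupp
    haveI := sc.probν
    have hint : Det (k + 1) (fun ω => G ω * f (shf (k + 1) ω)) :=
      (hdG.mono (by omega)).mul (Det.mono (by omega) (hdf.shf (k + 1)))
    rw [sc.key μ hμ k (fun ω => G ω * f (shf (k + 1) ω)) (hG.mul (hf.comp (measurable_shf _))) hint]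
    have hc : Measurable (fun s : 𝓧 × Bool => f (fun _ => s)) :=
      hf.comp (measurable_pi_lambda _ fun _ => measurable_id)
    have hpt : ∀ (ω : ℕ → 𝓧 × Bool) s,
        G (ext k ω s) * f (shf (k + 1) (ext k ω s)) = G ω * f (fun _ => s) := by
      intro ω s
      have h1 : G (ext k ω s) = G ω := (hdG _ _ fun i hi => by simp [ext, hi]).symm
      have h2 : f (shf (k + 1) (ext k ω s)) = f (fun _ => s) :=
        hdf _ _ fun i hi => by rw [Nat.le_zero.1 hi]; simp [shf, ext]
      rw [h1, h2]
    have hstepconst : ∀ ω : ℕ → 𝓧 × Bool,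
        ∫⁻ s, G (ext k ω s) * f (shf (k + 1) (ext k ω s)) ∂(sc.K (ω k))
          = G ω * ∫⁻ ω', f ω' ∂(sc.traj (splitInit sc.β sc.J sc.ν)) := by
      intro ω
      rw [lintegral_congr (hpt ω), lintegral_const_mul _ hc]
      rcases Bool.eq_false_or_eq_true (ω k).2 with hb | hb
      · rw [sc.K_true hb,
          ← sc.key0 (splitInit sc.β sc.J sc.ν) f hf hdf]
      · rw [hsupp ω hb, zero_mul, zero_mul]
    rw [lintegral_congr hstepconst, lintegral_mul_const _ hG]
  | succ n ih =>
    intro f hf hdf k G hG hdG hsupp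
    haveI := sc.probν
    set H : (ℕ → 𝓧 × Bool) → ℝ≥0∞ := fun ω' => ∫⁻ s, f (ext n ω' s) ∂(sc.K (ω' n)) with hH
    have hH_m : Measurable H := sc.measurable_keyInt n f hf
    have hH_det : Det n H := sc.det_keyInt n f
    have hint : Det (k + 1 + n + 1) (fun ω => G ω * f (shf (k + 1) ω)) :=
      (hdG.mono (by omega)).mul (Det.mono (by omega) (hdf.shf (k + 1)))
    rw [sc.key μ hμ (k + 1 + n) (fun ω => G ω * f (shf (k + 1) ω)) (hG.mul (hf.comp (measurable_shf _))) hint]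
    have hpt : ∀ (ω : ℕ → 𝓧 × Bool) s,
        G (ext (k + 1 + n) ω s) * f (shf (k + 1) (ext (k + 1 + n) ω s))
          = G ω * f (ext n (shf (k + 1) ω) s) := by
      intro ω s
      have h1 : G (ext (k + 1 + n) ω s) = G ω :=
        (hdG _ _ fun i hi => by simp only [ext]; rw [if_pos (by omega)]).symm
      have h2 : shf (k + 1) (ext (k + 1 + n) ω s) = ext n (shf (k + 1) ω) s :=
        funext fun i => by
          simp only [shf, ext]
          by_cases h : i ≤ n
          · rw [if_pos (by omega), if_pos h]
          · rw [if_neg (by omega), if_neg h]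
      rw [h1, h2]
    calc ∫⁻ ω, ∫⁻ s, G (ext (k + 1 + n) ω s) * f (shf (k + 1) (ext (k + 1 + n) ω s))
            ∂(sc.K (ω (k + 1 + n))) ∂(sc.traj μ)
        = ∫⁻ ω, G ω * H (shf (k + 1) ω) ∂(sc.traj μ) := by
          refine lintegral_congr fun ω => ?_
          have hbase : sc.K (ω (k + 1 + n)) = sc.K ((shf (k + 1) ω) n) := by
            simp only [shf]; rw [show n + (k + 1) = k + 1 + n by omega]
          rw [hbase, lintegral_congr (hpt ω)]
          exact lintegral_const_mul _ (hf.comp (measurable_ext_right n _))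
      _ = (∫⁻ ω, G ω ∂(sc.traj μ))
            * ∫⁻ ω, H ω ∂(sc.traj (splitInit sc.β sc.J sc.ν)) :=
          ih H hH_m hH_det k G hG hdG hsupp
      _ = _ := by
          rw [← sc.key (splitInit sc.β sc.J sc.ν) (sc.isProb_splitInit sc.ν) n f hf hdf]

/-! ### Bell indicators -/

def nb (n : ℕ) (ω : ℕ → 𝓧 × Bool) : ℝ≥0∞ := if ∀ i, i < n → (ω i).2 = false then 1 else 0

def bell (k : ℕ) (ω : ℕ → 𝓧 × Bool) : ℝ≥0∞ := if (ω k).2 = true then 1 else 0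

def nbIn (a b : ℕ) (ω : ℕ → 𝓧 × Bool) : ℝ≥0∞ :=
  if ∀ i, a ≤ i → i < b → (ω i).2 = false then 1 else 0

lemma measurableSet_nbSet (n : ℕ) :
    MeasurableSet {ω : ℕ → 𝓧 × Bool | ∀ i, i < n → (ω i).2 = false} := by
  have : {ω : ℕ → 𝓧 × Bool | ∀ i, i < n → (ω i).2 = false}
      = ⋂ i, ⋂ (_ : i < n), {ω : ℕ → 𝓧 × Bool | (ω i).2 = false} := by
    ext ω; simp
  rw [this]
  exact MeasurableSet.iInter fun i => MeasurableSet.iInter fun _ =>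
    (measurable_snd.comp (measurable_pi_apply i)) (measurableSet_singleton false)

lemma measurable_nb (n : ℕ) : Measurable (nb (𝓧 := 𝓧) n) := by
  unfold nb
  exact Measurable.ite (measurableSet_nbSet n) measurable_const measurable_const

lemma measurable_bell (k : ℕ) : Measurable (bell (𝓧 := 𝓧) k) := by
  unfold bell
  exact Measurable.ite
    ((measurable_snd.comp (measurable_pi_apply k)) (measurableSet_singleton true))
    measurable_const measurable_const

lemma measurable_nbIn (a b : ℕ) : Measurable (nbIn (𝓧 := 𝓧) a b) := by
  unfold nbIn
  refine Measurable.ite ?_ measurable_const measurable_const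
  have : {ω : ℕ → 𝓧 × Bool | ∀ i, a ≤ i → i < b → (ω i).2 = false}
      = ⋂ i, ⋂ (_ : a ≤ i), ⋂ (_ : i < b), {ω : ℕ → 𝓧 × Bool | (ω i).2 = false} := by
    ext ω; simp
  rw [this]
  exact MeasurableSet.iInter fun i => MeasurableSet.iInter fun _ =>
    MeasurableSet.iInter fun _ =>
      (measurable_snd.comp (measurable_pi_apply i)) (measurableSet_singleton false)

lemma det_nb (n : ℕ) : Det (𝓧 := 𝓧) n (nb n) := by
  intro ω ω' ha
  unfold nb
  refine if_congr ?_ rfl rfl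
  constructor
  · intro h i hi; rw [← ha i (by omega)]; exact h i hi
  · intro h i hi; rw [ha i (by omega)]; exact h i hi

lemma det_bell (k : ℕ) : Det (𝓧 := 𝓧) k (bell k) := by
  intro ω ω' ha
  unfold bell
  rw [ha k le_rfl]

lemma bell_supp (k : ℕ) (ω : ℕ → 𝓧 × Bool) (h : (ω k).2 = false) : bell k ω = 0 := by
  simp [bell, h]

lemma bell_shf (k : ℕ) (ω : ℕ → 𝓧 × Bool) : bell 0 (shf k ω) = bell k ω := by
  simp [bell, shf]

lemma nbIn_shf (k n : ℕ) (ω : ℕ → 𝓧 × Bool) :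
    nbIn (k + 1) n ω = nb (n - (k + 1)) (shf (k + 1) ω) := by
  unfold nbIn nb
  refine if_congr ?_ rfl rfl
  constructor
  · intro h i hi
    exact h (i + (k + 1)) (by omega) (by omega)
  · intro h i h1 h2
    have := h (i - (k + 1)) (by omega)
    simpa [shf, show i - (k + 1) + (k + 1) = i by omega] using this

lemma lintegral_nb (n : ℕ) (μ : Measure (ℕ → 𝓧 × Bool)) :
    ∫⁻ ω, nb n ω ∂μ = μ {ω | ∀ i, i < n → (ω i).2 = false} := by
  rw [← lintegral_indicator_one (measurableSet_nbSet n)]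
  refine lintegral_congr fun ω => ?_
  by_cases h : ∀ i, i < n → (ω i).2 = false <;>
    simp [nb, h, Set.indicator_apply]

lemma partition (n : ℕ) (ω : ℕ → 𝓧 × Bool) :
    nb n ω + ∑ k ∈ Finset.range n, bell k ω * nbIn (k + 1) n ω = 1 := by
  induction n with
  | zero => simp [nb]
  | succ n ih =>
    rcases Bool.eq_false_or_eq_true (ω n).2 with hb | hb
    · have h1 : nb (n + 1) ω = 0 := by
        rw [nb, if_neg]
        push_neg
        exact ⟨n, by omega, by simp [hb]⟩
      have h2 : bell n ω * nbIn (n + 1) (n + 1) ω = 1 := by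
        rw [bell, if_pos hb, nbIn, if_pos (fun i h1 h2 => absurd h1 (by omega)), one_mul]
      have h3 : ∀ k ∈ Finset.range n, bell k ω * nbIn (k + 1) (n + 1) ω = 0 := by
        intro k hk
        rw [Finset.mem_range] at hk
        have : nbIn (k + 1) (n + 1) ω = 0 := by
          rw [nbIn, if_neg]
          push_neg
          exact ⟨n, by omega, by omega, by simp [hb]⟩
        rw [this, mul_zero]
      rw [h1, Finset.sum_range_succ, Finset.sum_eq_zero h3, h2]
      simp
    · have h1 : nb (n + 1) ω = nb n ω := by
        unfold nb
        refine if_congr ?_ rfl rfl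
        constructor
        · intro h i hi; exact h i (by omega)
        · intro h i hi
          rcases Nat.lt_succ_iff_lt_or_eq.1 hi with h' | h'
          · exact h i h'
          · rw [h']; exact hb
      have h2 : ∀ k ∈ Finset.range n, bell k ω * nbIn (k + 1) (n + 1) ω
          = bell k ω * nbIn (k + 1) n ω := by
        intro k hk
        congr 1
        unfold nbIn
        refine if_congr ?_ rfl rfl
        constructor
        · intro h i ha hi; exact h i ha (by omega)
        · intro h i ha hi
          rcases Nat.lt_succ_iff_lt_or_eq.1 hi with h' | h'
          · exact h i ha h'
          · rw [h']; exact hb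
      have h3 : bell n ω * nbIn (n + 1) (n + 1) ω = 0 := by
        rw [bell, if_neg (by simp [hb]), zero_mul]
      rw [Finset.sum_range_succ, h3, add_zero, h1, Finset.sum_congr rfl h2, ih]

/-! ### The occupation-measure (Kac/Pitman) formula, bounded case -/

lemma star_bounded (π : Measure 𝓧) [IsProbabilityMeasure π]
    (hinv : π.bind (fun x => sc.P x) = π)
    (hHarrisπ : sc.traj (splitInit sc.β sc.J π) {ω | ∀ n : ℕ, (ω n).2 = false} = 0)
    (m : ℕ) (f : (ℕ → 𝓧 × Bool) → ℝ≥0∞) (hf : Measurable f) (hdet : Det m f)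
    (M : ℝ≥0∞) (hM : M ≠ ∞) (hfM : ∀ ω, f ω ≤ M) :
    ∫⁻ ω, f ω ∂(sc.traj (splitInit sc.β sc.J π))
      = (∫⁻ ω, bell 0 ω ∂(sc.traj (splitInit sc.β sc.J π)))
        * ∑' j, ∫⁻ ω, nb j ω * f (shf j ω) ∂(sc.traj (splitInit sc.β sc.J sc.ν)) := by
  haveI := sc.isProb_splitInit π
  haveI := sc.probν
  haveI := sc.probTraj _ (sc.isProb_splitInit π)
  set μπ := sc.traj (splitInit sc.β sc.J π) with hμπ
  set μν := sc.traj (splitInit sc.β sc.J sc.ν) with hμν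
  set c := ∫⁻ ω, bell 0 ω ∂μπ with hcdef
  set a : ℕ → ℝ≥0∞ := fun j => ∫⁻ ω, nb j ω * f (shf j ω) ∂μν with ha
  have key_n : ∀ n : ℕ, ∫⁻ ω, f ω ∂μπ
      = (∫⁻ ω, nb n ω * f (shf n ω) ∂μπ) + c * ∑ j ∈ Finset.range n, a j := by
    intro n
    have h0 : ∫⁻ ω, f ω ∂μπ = ∫⁻ ω, f (shf n ω) ∂μπ :=
      (sc.shift_inv π hinv m f hf hdet n).symm
    have h1 : ∀ ω, f (shf n ω) = nb n ω * f (shf n ω)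
        + ∑ k ∈ Finset.range n, bell k ω * (nbIn (k + 1) n ω * f (shf n ω)) := by
      intro ω
      calc f (shf n ω)
          = (nb n ω + ∑ k ∈ Finset.range n, bell k ω * nbIn (k + 1) n ω) * f (shf n ω) := by
            rw [partition n ω, one_mul]
        _ = _ := by
            rw [add_mul, Finset.sum_mul]
            congr 1
            exact Finset.sum_congr rfl fun k hk => by ring
    rw [h0, lintegral_congr h1,
      lintegral_add_left (f := fun ω => nb n ω * f (shf n ω))
        ((measurable_nb n).mul (hf.comp (measurable_shf n)))]
    congr 1
    rw [lintegral_finset_sum (f := fun k ω => bell k ω * (nbIn (k + 1) n ω * f (shf n ω))) _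
      (fun k hk =>
        (measurable_bell k).mul ((measurable_nbIn _ _).mul (hf.comp (measurable_shf n))))]
    have hterm : ∀ k ∈ Finset.range n,
        ∫⁻ ω, bell k ω * (nbIn (k + 1) n ω * f (shf n ω)) ∂μπ = c * a (n - (k + 1)) := by
      intro k hk
      rw [Finset.mem_range] at hk
      have hform : ∀ ω, bell k ω * (nbIn (k + 1) n ω * f (shf n ω))
          = bell k ω * ((fun ω' => nb (n - (k + 1)) ω' * f (shf (n - (k + 1)) ω'))
              (shf (k + 1) ω)) := by
        intro ω
        have e1 : nbIn (k + 1) n ω = nb (n - (k + 1)) (shf (k + 1) ω) := nbIn_shf k n ω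
        have e2 : f (shf n ω) = f (shf (n - (k + 1)) (shf (k + 1) ω)) := by
          rw [shf_shf, show n - (k + 1) + (k + 1) = n by omega]
        rw [e1, e2]
      rw [lintegral_congr hform,
        sc.regen_indep _ inferInstance (n - (k + 1) + m)
          (fun ω' => nb (n - (k + 1)) ω' * f (shf (n - (k + 1)) ω'))
          ((measurable_nb (n - (k + 1))).mul (hf.comp (measurable_shf (n - (k + 1)))))
          (((det_nb (n - (k + 1))).mono (by omega)).mul
            ((hdet.shf (n - (k + 1))).mono (by omega)))
          k (bell k) (measurable_bell k) (det_bell k) (bell_supp k)]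
      have hbellint : ∫⁻ ω, bell k ω ∂μπ = c := by
        calc ∫⁻ ω, bell k ω ∂μπ = ∫⁻ ω, bell 0 (shf k ω) ∂μπ :=
              lintegral_congr fun ω => (bell_shf k ω).symm
          _ = c := sc.shift_inv π hinv 0 (bell 0) (measurable_bell 0) (det_bell 0) k
      rw [hbellint]
    rw [Finset.sum_congr rfl hterm, ← Finset.mul_sum]
    congr 1
    have hre : ∀ k ∈ Finset.range n, a (n - (k + 1)) = a (n - 1 - k) := fun k hk => by
      rw [show n - (k + 1) = n - 1 - k by omega]
    rw [Finset.sum_congr rfl hre, Finset.sum_range_reflect]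
  have hup : c * ∑' j, a j ≤ ∫⁻ ω, f ω ∂μπ := by
    rw [ENNReal.tsum_eq_iSup_nat, ENNReal.mul_iSup]
    exact iSup_le fun n => by rw [key_n n]; exact le_add_self
  have hqn : Filter.Tendsto (fun n => μπ {ω | ∀ i, i < n → (ω i).2 = false})
      Filter.atTop (nhds 0) := by
    have h1 : (⋂ n, {ω : ℕ → 𝓧 × Bool | ∀ i, i < n → (ω i).2 = false})
        = {ω : ℕ → 𝓧 × Bool | ∀ i : ℕ, (ω i).2 = false} := by
      ext ω
      constructor
      · intro h i
        exact (Set.mem_iInter.1 h (i + 1)) i (by omega)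
      · intro h
        exact Set.mem_iInter.2 fun n i _ => h i
    have h2 := MeasureTheory.tendsto_measure_iInter_atTop (μ := μπ)
      (fun n => (measurableSet_nbSet n).nullMeasurableSet)
      (fun n n' hnn' => fun ω hω i hi => hω i (by omega))
      ⟨0, measure_ne_top _ _⟩
    rw [h1] at h2
    rw [hHarrisπ] at h2
    exact h2
  have hdown : ∫⁻ ω, f ω ∂μπ ≤ c * ∑' j, a j := by
    have hbd : ∀ n, ∫⁻ ω, f ω ∂μπ
        ≤ M * μπ {ω | ∀ i, i < n → (ω i).2 = false} + c * ∑' j, a j := by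
      intro n
      rw [key_n n]
      refine add_le_add ?_ (mul_le_mul_right (ENNReal.sum_le_tsum _) _)
      calc ∫⁻ ω, nb n ω * f (shf n ω) ∂μπ
          ≤ ∫⁻ ω, nb n ω * M ∂μπ := lintegral_mono fun ω => mul_le_mul_right (hfM _) _
        _ = (∫⁻ ω, nb n ω ∂μπ) * M := lintegral_mul_const _ (measurable_nb n)
        _ = M * μπ {ω | ∀ i, i < n → (ω i).2 = false} := by
            rw [lintegral_nb, mul_comm]
    have hlim : Filter.Tendsto
        (fun n => M * μπ {ω | ∀ i, i < n → (ω i).2 = false} + c * ∑' j, a j)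
        Filter.atTop (nhds (c * ∑' j, a j)) := by
      have := (ENNReal.Tendsto.const_mul (a := M) hqn (Or.inr hM)).add
        (tendsto_const_nhds :
          Filter.Tendsto (fun _ : ℕ => c * ∑' j, a j) Filter.atTop (nhds (c * ∑' j, a j)))
      simpa using this
    exact ge_of_tendsto' hlim hbd
  exact le_antisymm hdown hup

/-! ### The occupation-measure formula, general case -/

lemma star (π : Measure 𝓧) [IsProbabilityMeasure π]
    (hinv : π.bind (fun x => sc.P x) = π)
    (hHarrisπ : sc.traj (splitInit sc.β sc.J π) {ω | ∀ n : ℕ, (ω n).2 = false} = 0)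
    (m : ℕ) (f : (ℕ → 𝓧 × Bool) → ℝ≥0∞) (hf : Measurable f) (hdet : Det m f) :
    ∫⁻ ω, f ω ∂(sc.traj (splitInit sc.β sc.J π))
      = (∫⁻ ω, bell 0 ω ∂(sc.traj (splitInit sc.β sc.J π)))
        * ∑' j, ∫⁻ ω, nb j ω * f (shf j ω) ∂(sc.traj (splitInit sc.β sc.J sc.ν)) := by
  set μπ := sc.traj (splitInit sc.β sc.J π) with hμπ
  set μν := sc.traj (splitInit sc.β sc.J sc.ν) with hμν
  set c := ∫⁻ ω, bell 0 ω ∂μπ with hcdef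
  have hsup : ∀ x : ℝ≥0∞, ⨆ N : ℕ, min x (N : ℝ≥0∞) = x := by
    intro x
    refine le_antisymm (iSup_le fun N => min_le_left _ _) ?_
    rcases eq_or_ne x ∞ with hx | hx
    · subst hx
      calc ∞ = ⨆ N : ℕ, (N : ℝ≥0∞) := ENNReal.iSup_natCast.symm
        _ ≤ ⨆ N : ℕ, min ∞ (N : ℝ≥0∞) := iSup_mono fun N => by rw [min_eq_right le_top]
    · obtain ⟨N, hN⟩ := ENNReal.exists_nat_gt hx
      exact le_iSup_of_le N (by rw [min_eq_left hN.le])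
  have hminmeas : ∀ N : ℕ, Measurable fun ω => min (f ω) (N : ℝ≥0∞) :=
    fun N => hf.min measurable_const
  have hmindet : ∀ N : ℕ, Det m fun ω => min (f ω) (N : ℝ≥0∞) := by
    intro N ω ω' haa
    show min (f ω) (N : ℝ≥0∞) = min (f ω') (N : ℝ≥0∞)
    rw [hdet ω ω' haa]
  have htr : ∀ N : ℕ, ∫⁻ ω, min (f ω) (N : ℝ≥0∞) ∂μπ
      = c * ∑' j, ∫⁻ ω, nb j ω * min (f (shf j ω)) (N : ℝ≥0∞) ∂μν := fun N =>
    sc.star_bounded π hinv hHarrisπ m _ (hminmeas N) (hmindet N) N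
      (ENNReal.natCast_ne_top N) (fun ω => min_le_right _ _)
  have hL : ∫⁻ ω, f ω ∂μπ = ⨆ N : ℕ, ∫⁻ ω, min (f ω) (N : ℝ≥0∞) ∂μπ := by
    rw [← lintegral_iSup (fun N => hminmeas N)
      (fun N N' h ω => min_le_min le_rfl (Nat.cast_le.2 h))]
    exact lintegral_congr fun ω => (hsup (f ω)).symm
  have hR : ∀ j, ∫⁻ ω, nb j ω * f (shf j ω) ∂μν
      = ⨆ N : ℕ, ∫⁻ ω, nb j ω * min (f (shf j ω)) (N : ℝ≥0∞) ∂μν := by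
    intro j
    rw [← lintegral_iSup (f := fun N ω => nb j ω * min (f (shf j ω)) (N : ℝ≥0∞))
      (fun N => (measurable_nb j).mul ((hminmeas N).comp (measurable_shf j)))
      (fun N N' h ω => mul_le_mul_right (min_le_min le_rfl (Nat.cast_le.2 h)) _)]
    refine lintegral_congr fun ω => ?_
    rw [← ENNReal.mul_iSup, hsup]
  calc ∫⁻ ω, f ω ∂μπ = ⨆ N : ℕ, ∫⁻ ω, min (f ω) (N : ℝ≥0∞) ∂μπ := hL
    _ = ⨆ N : ℕ, c * ∑' j, ∫⁻ ω, nb j ω * min (f (shf j ω)) (N : ℝ≥0∞) ∂μν := by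
        exact iSup_congr htr
    _ = c * ⨆ N : ℕ, ∑' j, ∫⁻ ω, nb j ω * min (f (shf j ω)) (N : ℝ≥0∞) ∂μν :=
        (ENNReal.mul_iSup _ _).symm
    _ = c * ∑' j, ∫⁻ ω, nb j ω * f (shf j ω) ∂μν := by
        congr 1
        have hswap : (⨆ N : ℕ, ∑' j : ℕ,
            ∫⁻ ω, nb j ω * min (f (shf j ω)) (N : ℝ≥0∞) ∂μν)
            = ∑' j : ℕ, ⨆ N : ℕ, ∫⁻ ω, nb j ω * min (f (shf j ω)) (N : ℝ≥0∞) ∂μν := by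
          simp_rw [← MeasureTheory.lintegral_count]
          rw [← lintegral_iSup
            (f := fun (N : ℕ) (j : ℕ) =>
              ∫⁻ ω, nb j ω * min (f (shf j ω)) (N : ℝ≥0∞) ∂μν)
            (fun N => measurable_from_nat)
            (fun N N' h => fun j => lintegral_mono fun ω =>
              mul_le_mul_right (min_le_min le_rfl (Nat.cast_le.2 h)) _)]
        rw [hswap]
        exact tsum_congr fun j => (hR j).symm


/-! ### Pathwise lemmas about the regeneration time -/

lemma T_mem {ω : ℕ → 𝓧 × Bool} (hE : ∃ n, (ω n).2 = true) :
    1 ≤ T ω ∧ (ω (T ω - 1)).2 = true := by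
  obtain ⟨n, hn⟩ := hE
  have hne : {n | 1 ≤ n ∧ (ω (n - 1)).2 = true}.Nonempty :=
    ⟨n + 1, ⟨by omega, by simpa using hn⟩⟩
  exact Nat.sInf_mem hne

lemma T_min {ω : ℕ → 𝓧 × Bool} {k : ℕ} (h1 : 1 ≤ k) (hb : (ω (k - 1)).2 = true) :
    T ω ≤ k := Nat.sInf_le ⟨h1, hb⟩

lemma not_bell_of_lt_T {ω : ℕ → 𝓧 × Bool} {i : ℕ} (hi : i + 1 < T ω) :
    (ω i).2 = false := by
  by_contra h
  have htrue : (ω i).2 = true := by simpa using h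
  have := T_min (ω := ω) (k := i + 1) (by omega) (by simpa using htrue)
  omega

lemma nb_eq_ite {ω : ℕ → 𝓧 × Bool} (hE : ∃ n, (ω n).2 = true) (j : ℕ) :
    nb j ω = if j < T ω then 1 else 0 := by
  obtain ⟨h1, hbell⟩ := T_mem hE
  unfold nb
  refine if_congr ?_ rfl rfl
  constructor
  · intro h
    by_contra hj
    have hfalse := h (T ω - 1) (by omega)
    rw [hfalse] at hbell
    exact absurd hbell (by simp)
  · intro h i hi
    exact not_bell_of_lt_T (by omega)

lemma nbshift_eq_ite {ω : ℕ → 𝓧 × Bool} (hE : ∃ n, (ω n).2 = true) (j m : ℕ)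
    (hj : j < T ω) :
    nb m (shf j ω) = if j + m < T ω then 1 else 0 := by
  obtain ⟨h1, hbell⟩ := T_mem hE
  unfold nb
  refine if_congr ?_ rfl rfl
  constructor
  · intro h
    by_contra hcon
    have hfalse := h (T ω - 1 - j) (by omega)
    rw [show (shf j ω) (T ω - 1 - j) = ω (T ω - 1) from by
      simp only [shf]; congr 1; omega] at hfalse
    rw [hfalse] at hbell
    exact absurd hbell (by simp)
  · intro h i hi
    exact not_bell_of_lt_T (i := i + j) (by omega)

lemma T_tsum {ω : ℕ → 𝓧 × Bool} (hE : ∃ n, (ω n).2 = true) :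
    (T ω : ℝ≥0∞) = ∑' j : ℕ, nb j ω := by
  have h := nb_eq_ite hE
  have hvan : ∀ j ∉ Finset.range (T ω), nb j ω = 0 := by
    intro j hj
    rw [h j, if_neg (by simpa using hj)]
  rw [tsum_eq_sum hvan]
  calc (T ω : ℝ≥0∞) = ∑ _j ∈ Finset.range (T ω), (1 : ℝ≥0∞) := by simp
    _ = _ := Finset.sum_congr rfl fun j hj => by
        rw [h j, if_pos (Finset.mem_range.1 hj)]

lemma sq_expand (t : ℕ) (a : ℕ → ℝ≥0∞) :
    (∑ j ∈ Finset.range t, a j) ^ 2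
      = ∑ j ∈ Finset.range t,
          (a j ^ 2 + 2 * (a j * ∑ i ∈ Finset.range (t - j - 1), a (j + i + 1))) := by
  induction t with
  | zero => simp
  | succ t ih =>
    rw [Finset.sum_range_succ (f := a)]
    have hexp : (∑ j ∈ Finset.range t, a j + a t) ^ 2
        = (∑ j ∈ Finset.range t, a j) ^ 2
          + (2 * ((∑ j ∈ Finset.range t, a j) * a t) + a t ^ 2) := by ring
    rw [hexp, ih, Finset.sum_range_succ]
    have hlast : a t ^ 2 + 2 * (a t * ∑ i ∈ Finset.range (t + 1 - t - 1), a (t + i + 1))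
        = a t ^ 2 := by
      rw [show t + 1 - t - 1 = 0 by omega]; simp
    rw [hlast]
    have hterm : ∀ j ∈ Finset.range t,
        a j ^ 2 + 2 * (a j * ∑ i ∈ Finset.range (t + 1 - j - 1), a (j + i + 1))
          = (a j ^ 2 + 2 * (a j * ∑ i ∈ Finset.range (t - j - 1), a (j + i + 1)))
            + 2 * (a j * a t) := by
      intro j hj
      rw [Finset.mem_range] at hj
      rw [show t + 1 - j - 1 = (t - j - 1) + 1 by omega, Finset.sum_range_succ,
        show j + (t - j - 1) + 1 = t by omega]
      ring
    have hmul : ∑ j ∈ Finset.range t, 2 * (a j * a t)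
        = 2 * ((∑ j ∈ Finset.range t, a j) * a t) := by
      rw [← Finset.mul_sum, ← Finset.sum_mul]
    rw [Finset.sum_congr rfl hterm, Finset.sum_add_distrib, Finset.sum_add_distrib, hmul,
      Finset.sum_add_distrib]
    ring

end SplitChain

end

open SplitChain in
/-- **Second moment of a regeneration block.** Under the small set condition, for any
nonnegative measurable `g`,
`E_ν[(∑_{i=0}^{T-1} g(X_i))²]
  = E_ν[T] · (E_π[g(X_0)²] + 2 ∑_{n=1}^∞ E_π[g(X_0) g(X_n) 1(T > n)])`. -/
theorem block_second_moment {𝓧 : Type*} [MeasurableSpace 𝓧] (sc : SplitChain 𝓧)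
    (π : Measure 𝓧) [IsProbabilityMeasure π]
    (hinv : π.bind (fun x => sc.P x) = π)
    (hHarris : ∀ ξ : Measure 𝓧, IsProbabilityMeasure ξ →
      sc.law ξ {ω | ∀ n : ℕ, (ω n).2 = false} = 0)
    (g : 𝓧 → ℝ) (hg : Measurable g) (hg0 : ∀ x, 0 ≤ g x) :
    ∫⁻ ω, ENNReal.ofReal ((∑ i ∈ Finset.range (T ω), g ((ω i).1)) ^ 2) ∂(sc.law sc.ν)
      = (∫⁻ ω, (T ω : ℝ≥0∞) ∂(sc.law sc.ν)) *
        ((∫⁻ ω, ENNReal.ofReal ((g ((ω 0).1)) ^ 2) ∂(sc.law π))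
          + 2 * ∑' n : ℕ,
            ∫⁻ ω, (if n + 1 < T ω
              then ENNReal.ofReal (g ((ω 0).1) * g ((ω (n + 1)).1)) else 0)
              ∂(sc.law π)) := by
  classical
  haveI := sc.probν
  haveI hPπ : IsProbabilityMeasure (splitInit sc.β sc.J π) := sc.isProb_splitInit π
  haveI hPν : IsProbabilityMeasure (splitInit sc.β sc.J sc.ν) := sc.isProb_splitInit sc.ν
  simp only [SplitChain.law]
  set μπ : Measure (ℕ → 𝓧 × Bool) := sc.traj (splitInit sc.β sc.J π) with hμπ
  set μν : Measure (ℕ → 𝓧 × Bool) := sc.traj (splitInit sc.β sc.J sc.ν) with hμν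
  haveI : IsProbabilityMeasure μπ := sc.probTraj _ hPπ
  haveI : IsProbabilityMeasure μν := sc.probTraj _ hPν
  have hHπ : μπ {ω | ∀ n : ℕ, (ω n).2 = false} = 0 := hHarris π inferInstance
  have hHν : μν {ω | ∀ n : ℕ, (ω n).2 = false} = 0 := hHarris sc.ν sc.probν
  have haeπ : ∀ᵐ ω ∂μπ, ∃ n : ℕ, (ω n).2 = true := by
    rw [ae_iff]
    have hset : {ω : ℕ → 𝓧 × Bool | ¬ ∃ n : ℕ, (ω n).2 = true}
        = {ω : ℕ → 𝓧 × Bool | ∀ n : ℕ, (ω n).2 = false} := by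
      ext ω; simp
    rw [hset]; exact hHπ
  have haeν : ∀ᵐ ω ∂μν, ∃ n : ℕ, (ω n).2 = true := by
    rw [ae_iff]
    have hset : {ω : ℕ → 𝓧 × Bool | ¬ ∃ n : ℕ, (ω n).2 = true}
        = {ω : ℕ → 𝓧 × Bool | ∀ n : ℕ, (ω n).2 = false} := by
      ext ω; simp
    rw [hset]; exact hHν
  set c : ℝ≥0∞ := ∫⁻ ω, bell 0 ω ∂μπ with hcdef
  -- the basic elementary functions
  set G1 : (ℕ → 𝓧 × Bool) → ℝ≥0∞ := fun ω => ENNReal.ofReal (g ((ω 0).1)) with hG1def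
  have hG1m : Measurable G1 :=
    (hg.comp (measurable_fst.comp (measurable_pi_apply 0))).ennreal_ofReal
  have hG1det : Det 0 G1 := fun ω ω' ha => by
    show ENNReal.ofReal (g ((ω 0).1)) = ENNReal.ofReal (g ((ω' 0).1))
    rw [ha 0 le_rfl]
  have hG1shf : ∀ (i : ℕ) (ω : ℕ → 𝓧 × Bool), G1 (shf i ω) = ENNReal.ofReal (g ((ω i).1)) :=
    fun i ω => by simp [hG1def, shf]
  set F0 : (ℕ → 𝓧 × Bool) → ℝ≥0∞ := fun ω => G1 ω ^ 2 with hF0def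
  set FF : ℕ → (ℕ → 𝓧 × Bool) → ℝ≥0∞ :=
    fun n ω => G1 ω * (G1 (shf (n + 1) ω) * nb (n + 1) ω) with hFFdef
  have hF0m : Measurable F0 := hG1m.pow_const 2
  have hF0det : Det 0 F0 := fun ω ω' ha => by
    show G1 ω ^ 2 = G1 ω' ^ 2
    rw [hG1det ω ω' ha]
  have hFFm : ∀ n, Measurable (FF n) := fun n =>
    hG1m.mul ((hG1m.comp (measurable_shf (n + 1))).mul (measurable_nb (n + 1)))
  have hFFdet : ∀ n, Det (n + 1) (FF n) := fun n =>
    (hG1det.mono (Nat.zero_le _)).mul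
      (((hG1det.shf (n + 1)).mono (by omega)).mul (det_nb (n + 1)))
  set W : (ℕ → 𝓧 × Bool) → ℝ≥0∞ :=
    fun ω => ∑ i ∈ Finset.range (T ω), ENNReal.ofReal (g ((ω i).1)) with hWdef
  -- LHS rewriting
  have hLHS : ∫⁻ ω, ENNReal.ofReal ((∑ i ∈ Finset.range (T ω), g ((ω i).1)) ^ 2) ∂μν
      = ∫⁻ ω, W ω ^ 2 ∂μν := by
    refine lintegral_congr fun ω => ?_
    rw [ENNReal.ofReal_pow (Finset.sum_nonneg fun i _ => hg0 _) 2,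
      ENNReal.ofReal_sum_of_nonneg (fun i _ => hg0 _)]
  -- star applications
  have hstar0 : ∫⁻ ω, F0 ω ∂μπ = c * ∑' j, ∫⁻ ω, nb j ω * F0 (shf j ω) ∂μν :=
    sc.star π hinv hHπ 0 F0 hF0m hF0det
  have hstarn : ∀ n, ∫⁻ ω, FF n ω ∂μπ
      = c * ∑' j, ∫⁻ ω, nb j ω * FF n (shf j ω) ∂μν :=
    fun n => sc.star π hinv hHπ (n + 1) (FF n) (hFFm n) (hFFdet n)
  have hstar1 : (1 : ℝ≥0∞) = c * ∑' j, ∫⁻ ω, nb j ω ∂μν := by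
    have h := sc.star π hinv hHπ 0 (fun _ => 1) measurable_const (fun ω ω' _ => rfl)
    simpa using h
  -- E_ν[T]
  have hBT : ∫⁻ ω, (T ω : ℝ≥0∞) ∂μν = ∑' j, ∫⁻ ω, nb j ω ∂μν := by
    rw [← lintegral_tsum (fun j => (measurable_nb j).aemeasurable)]
    refine lintegral_congr_ae ?_
    filter_upwards [haeν] with ω hE
    exact T_tsum hE
  have hcB : (∫⁻ ω, (T ω : ℝ≥0∞) ∂μν) * c = 1 := by
    rw [hBT, mul_comm]
    exact hstar1.symm
  -- rewriting C and D
  have hC : ∫⁻ ω, ENNReal.ofReal (g ((ω 0).1) ^ 2) ∂μπ = ∫⁻ ω, F0 ω ∂μπ :=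
    lintegral_congr fun ω => by
      rw [hF0def, hG1def]
      exact ENNReal.ofReal_pow (hg0 _) 2
  have hD : ∀ n : ℕ,
      ∫⁻ ω, (if n + 1 < T ω
          then ENNReal.ofReal (g ((ω 0).1) * g ((ω (n + 1)).1)) else 0) ∂μπ
        = ∫⁻ ω, FF n ω ∂μπ := by
    intro n
    refine lintegral_congr_ae ?_
    filter_upwards [haeπ] with ω hE
    have hnb := nb_eq_ite hE (n + 1)
    by_cases h : n + 1 < T ω
    · rw [if_pos h]
      show _ = G1 ω * (G1 (shf (n + 1) ω) * nb (n + 1) ω)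
      rw [hnb, if_pos h, mul_one, hG1shf, hG1def, ENNReal.ofReal_mul (hg0 _)]
    · rw [if_neg h]
      show _ = G1 ω * (G1 (shf (n + 1) ω) * nb (n + 1) ω)
      rw [hnb, if_neg h, mul_zero, mul_zero]
  -- the pointwise master function
  set Ψ : (ℕ → 𝓧 × Bool) → ℝ≥0∞ :=
    fun ω => ∑' j, nb j ω * (F0 (shf j ω) + 2 * ∑' n, FF n (shf j ω)) with hΨdef
  -- claim 1 : sum manipulation
  have claim1 : (∑' j, ∫⁻ ω, nb j ω * F0 (shf j ω) ∂μν)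
      + 2 * ∑' n, ∑' j, ∫⁻ ω, nb j ω * FF n (shf j ω) ∂μν
      = ∫⁻ ω, Ψ ω ∂μν := by
    have hswap : ∑' (n : ℕ), ∑' (j : ℕ), ∫⁻ ω, nb j ω * FF n (shf j ω) ∂μν
        = ∑' (j : ℕ), ∑' (n : ℕ), ∫⁻ ω, nb j ω * FF n (shf j ω) ∂μν :=
      ENNReal.tsum_comm
    have hj : ∀ j : ℕ, (∫⁻ ω, nb j ω * F0 (shf j ω) ∂μν)
        + 2 * ∑' n, ∫⁻ ω, nb j ω * FF n (shf j ω) ∂μν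
        = ∫⁻ ω, nb j ω * (F0 (shf j ω) + 2 * ∑' n, FF n (shf j ω)) ∂μν := by
      intro j
      rw [← lintegral_tsum (f := fun n ω => nb j ω * FF n (shf j ω)) (fun n =>
        ((measurable_nb j).mul ((hFFm n).comp (measurable_shf j))).aemeasurable)]
      rw [← lintegral_const_mul (f := fun ω => ∑' n, nb j ω * FF n (shf j ω)) 2 (by
        exact Measurable.ennreal_tsum fun n =>
          (measurable_nb j).mul ((hFFm n).comp (measurable_shf j)))]
      rw [← lintegral_add_left (f := fun ω => nb j ω * F0 (shf j ω))
        ((measurable_nb j).mul (hF0m.comp (measurable_shf j)))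
        (fun ω => 2 * ∑' n, nb j ω * FF n (shf j ω))]
      refine lintegral_congr fun ω => ?_
      rw [ENNReal.tsum_mul_left (a := nb j ω) (f := fun n => FF n (shf j ω))]
      ring
    calc (∑' j, ∫⁻ ω, nb j ω * F0 (shf j ω) ∂μν)
        + 2 * ∑' n, ∑' j, ∫⁻ ω, nb j ω * FF n (shf j ω) ∂μν
        = (∑' j, ∫⁻ ω, nb j ω * F0 (shf j ω) ∂μν)
          + ∑' j, 2 * ∑' n, ∫⁻ ω, nb j ω * FF n (shf j ω) ∂μν := by
          rw [hswap, ENNReal.tsum_mul_left]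
      _ = ∑' j, ((∫⁻ ω, nb j ω * F0 (shf j ω) ∂μν)
          + 2 * ∑' n, ∫⁻ ω, nb j ω * FF n (shf j ω) ∂μν) := by
          rw [ENNReal.tsum_add]
      _ = ∑' j, ∫⁻ ω, nb j ω * (F0 (shf j ω) + 2 * ∑' n, FF n (shf j ω)) ∂μν :=
          tsum_congr hj
      _ = ∫⁻ ω, Ψ ω ∂μν := by
          rw [← lintegral_tsum
            (f := fun j ω => nb j ω * (F0 (shf j ω) + 2 * ∑' n, FF n (shf j ω)))
            (fun j => ((measurable_nb j).mul
            ((hF0m.comp (measurable_shf j)).add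
              ((Measurable.ennreal_tsum fun n =>
                (hFFm n).comp (measurable_shf j)).const_mul 2))).aemeasurable)]
  -- claim 2 : pointwise identification with W²
  have claim2 : ∫⁻ ω, Ψ ω ∂μν = ∫⁻ ω, W ω ^ 2 ∂μν := by
    refine lintegral_congr_ae ?_
    filter_upwards [haeν] with ω hE
    have hnb := nb_eq_ite hE
    have hvan : ∀ j ∉ Finset.range (T ω),
        nb j ω * (F0 (shf j ω) + 2 * ∑' n, FF n (shf j ω)) = 0 := by
      intro j hj
      rw [hnb j, if_neg (by simpa using hj), zero_mul]
    show (∑' j, nb j ω * (F0 (shf j ω) + 2 * ∑' n, FF n (shf j ω))) = W ω ^ 2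
    rw [tsum_eq_sum hvan]
    have hterm : ∀ j ∈ Finset.range (T ω),
        nb j ω * (F0 (shf j ω) + 2 * ∑' n, FF n (shf j ω))
          = ENNReal.ofReal (g ((ω j).1)) ^ 2
            + 2 * (ENNReal.ofReal (g ((ω j).1))
              * ∑ i ∈ Finset.range (T ω - j - 1), ENNReal.ofReal (g ((ω (j + i + 1)).1))) := by
      intro j hj
      rw [Finset.mem_range] at hj
      have hFFval : ∀ n, FF n (shf j ω)
          = ENNReal.ofReal (g ((ω j).1))
            * (ENNReal.ofReal (g ((ω (n + 1 + j)).1))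
              * if j + (n + 1) < T ω then 1 else 0) := by
        intro n
        show G1 (shf j ω) * (G1 (shf (n + 1) (shf j ω)) * nb (n + 1) (shf j ω)) = _
        rw [hG1shf j ω, shf_shf, hG1shf (n + 1 + j) ω, nbshift_eq_ite hE j (n + 1) hj]
      have htsum : ∑' n, FF n (shf j ω)
          = ENNReal.ofReal (g ((ω j).1))
            * ∑ i ∈ Finset.range (T ω - j - 1), ENNReal.ofReal (g ((ω (j + i + 1)).1)) := by
        have hvan2 : ∀ n ∉ Finset.range (T ω - j - 1), FF n (shf j ω) = 0 := by
          intro n hn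
          rw [Finset.mem_range] at hn
          rw [hFFval n, if_neg (by omega), mul_zero, mul_zero]
        rw [tsum_eq_sum hvan2, Finset.mul_sum]
        refine Finset.sum_congr rfl fun n hn => ?_
        rw [Finset.mem_range] at hn
        rw [hFFval n, if_pos (by omega), mul_one, show n + 1 + j = j + n + 1 by omega]
      rw [hnb j, if_pos hj, one_mul, htsum]
      show G1 (shf j ω) ^ 2 + _ = _
      rw [hG1shf j ω]
    rw [Finset.sum_congr rfl hterm]
    rw [hWdef]
    exact (sq_expand (T ω) fun i => ENNReal.ofReal (g ((ω i).1))).symm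
  -- the bracket
  have hbracket : (∫⁻ ω, ENNReal.ofReal (g ((ω 0).1) ^ 2) ∂μπ)
      + 2 * ∑' n, ∫⁻ ω, (if n + 1 < T ω
          then ENNReal.ofReal (g ((ω 0).1) * g ((ω (n + 1)).1)) else 0) ∂μπ
      = c * ∫⁻ ω, W ω ^ 2 ∂μν := by
    rw [hC, tsum_congr hD, hstar0, tsum_congr hstarn, ENNReal.tsum_mul_left,
      mul_left_comm 2 c, ← mul_add, claim1, claim2]
  rw [hLHS, hbracket, ← mul_assoc, hcB, one_mul]
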